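/- Let 0 ≤ b < a < 1. Then there exists a constant C > 0 (depending only on a and b) such that for every x ∈ [0,∞), ∑_{n≥1} 2^{−an} · ( (x·2^n) ∧ 2^{bn} ) ≤ C · ( x^{(a−b)/(1−b)} ∨ x ), where ∧ denotes minimum and ∨ denotes maximum. -/

import Mathlib

open Real
set_option maxHeartbeats 1000000

/-- the elementary summation bound
`∑_{n≥1} 2^{-an} ((x 2^n) ∧ 2^{bn}) ≤ C (x^{(a−b)/(1−b)} ∨ x)` for `0 ≤ b < a < 1`. -/
theorem geometric_sum_interpolation_bound
    (a b : ℝ) (hb : 0 ≤ b) (hba : b < a) (ha : a < 1) :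
    ∃ C > 0, ∀ x : ℝ, 0 ≤ x →
      (∑' n : ℕ, (2 : ℝ) ^ (-(a * ((n : ℝ) + 1))) *
          min (x * 2 ^ ((n : ℝ) + 1)) ((2 : ℝ) ^ (b * ((n : ℝ) + 1))))
        ≤ C * max (x ^ ((a - b) / (1 - b))) x := by
  have h2 : (1:ℝ) < 2 := one_lt_two
  set r : ℝ := (2:ℝ) ^ (b - a) with hr_def
  set r₁ : ℝ := (2:ℝ) ^ (1 - a) with hr1_def
  have hr0 : 0 < r := rpow_pos_of_pos two_pos _
  have hr1 : r < 1 := rpow_lt_one_of_one_lt_of_neg h2 (by linarith)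
  have hr₁1 : 1 < r₁ :=
    (one_lt_rpow_iff_of_pos two_pos).2 (Or.inl ⟨h2, by linarith⟩)
  set θ : ℝ := (a - b) / (1 - b) with hθ_def
  have hθpos : 0 < θ := div_pos (by linarith) (by linarith)
  have hb1 : (1:ℝ) - b ≠ 0 := by linarith
  have hr₁pos : (0:ℝ) < r₁ - 1 := by linarith
  have hrpos' : (0:ℝ) < 1 - r := by linarith
  have hCpos : 0 < 4/(r₁-1) + 1/(1-r) :=
    add_pos (div_pos four_pos hr₁pos) (div_pos one_pos hrpos')
  refine ⟨4/(r₁-1) + 1/(1-r), hCpos, ?_⟩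
  intro x hx
  set f : ℕ → ℝ := fun n => (2 : ℝ) ^ (-(a * ((n : ℝ) + 1))) *
      min (x * 2 ^ ((n : ℝ) + 1)) ((2 : ℝ) ^ (b * ((n : ℝ) + 1))) with hf_def
  have hrpow : ∀ (c : ℝ) (k : ℕ), ((2:ℝ) ^ c) ^ k = (2:ℝ) ^ (c * (k:ℝ)) := by
    intro c k
    rw [← rpow_natCast ((2:ℝ)^c) k, ← rpow_mul (by norm_num)]
  have hf0 : ∀ n : ℕ, 0 ≤ f n := by
    intro n
    apply mul_nonneg (rpow_pos_of_pos two_pos _).le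
    exact le_min (mul_nonneg hx (rpow_pos_of_pos two_pos _).le)
      (rpow_pos_of_pos two_pos _).le
  have hfA : ∀ n : ℕ, f n ≤ r ^ (n+1) := by
    intro n
    have h1 : f n ≤ (2 : ℝ) ^ (-(a * ((n : ℝ) + 1))) * (2:ℝ) ^ (b * ((n : ℝ) + 1)) :=
      mul_le_mul_of_nonneg_left (min_le_right _ _) (rpow_pos_of_pos two_pos _).le
    calc f n ≤ (2 : ℝ) ^ (-(a * ((n : ℝ) + 1))) * (2:ℝ) ^ (b * ((n : ℝ) + 1)) := h1
      _ = r ^ (n+1) := by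
        rw [← rpow_add two_pos, hrpow (b-a) (n+1)]
        push_cast
        ring_nf
  have hfB : ∀ n : ℕ, f n ≤ x * r₁ ^ (n+1) := by
    intro n
    have h1 : f n ≤ (2 : ℝ) ^ (-(a * ((n : ℝ) + 1))) * (x * 2 ^ ((n : ℝ) + 1)) :=
      mul_le_mul_of_nonneg_left (min_le_left _ _) (rpow_pos_of_pos two_pos _).le
    calc f n ≤ (2 : ℝ) ^ (-(a * ((n : ℝ) + 1))) * (x * 2 ^ ((n : ℝ) + 1)) := h1
      _ = x * r₁ ^ (n+1) := by
        rw [hrpow (1-a) (n+1), mul_comm ((2:ℝ) ^ (-(a * ((n : ℝ) + 1)))) _,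
          mul_assoc, ← rpow_add two_pos]
        push_cast
        ring_nf
  have hgeo : Summable (fun n : ℕ => r ^ (n+1)) :=
    (summable_nat_add_iff 1).2 (summable_geometric_of_lt_one hr0.le hr1)
  have hsum : Summable f := Summable.of_nonneg_of_le hf0 hfA hgeo
  -- case x = 0
  rcases eq_or_lt_of_le hx with hx0 | hxpos
  · have : ∀ n : ℕ, f n = 0 := by
      intro n
      simp [hf_def, ← hx0, min_eq_left (rpow_pos_of_pos two_pos _).le]
    rw [show (∑' n : ℕ, f n) = 0 by rw [funext this]; exact tsum_zero]
    rw [← hx0]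
    rw [zero_rpow hθpos.ne']
    simp
  -- general tail bound
  have htail : ∀ N : ℕ, (∑' n : ℕ, f (n + N)) ≤ r ^ (N+1) * (1-r)⁻¹ := by
    intro N
    have hs1 : Summable (fun n : ℕ => f (n + N)) := (summable_nat_add_iff N).2 hsum
    have hs2 : Summable (fun n : ℕ => r^(N+1) * r ^ n) :=
      (summable_geometric_of_lt_one hr0.le hr1).mul_left _
    have hle : ∀ n : ℕ, f (n + N) ≤ r^(N+1) * r ^ n := by
      intro n
      calc f (n + N) ≤ r ^ (n + N + 1) := hfA _
        _ = r^(N+1) * r^n := by ring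
    have h1 := Summable.tsum_le_tsum hle hs1 hs2
    rw [tsum_mul_left, tsum_geometric_of_lt_one hr0.le hr1] at h1
    exact h1
  rcases le_or_gt 1 x with hx1 | hx1
  -- case x ≥ 1
  · have h1 : (∑' n : ℕ, f n) ≤ r ^ 1 * (1-r)⁻¹ := by
      have := htail 0
      simpa using this
    have h2' : r ^ 1 * (1-r)⁻¹ ≤ 1/(1-r) := by
      rw [pow_one, one_div]
      exact mul_le_of_le_one_left (by positivity) hr1.le
    have h3 : (1:ℝ)/(1-r) ≤ (4/(r₁-1) + 1/(1-r)) * x := by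
      have h4 : (1:ℝ)/(1-r) ≤ 4/(r₁-1) + 1/(1-r) := by
        have : (0:ℝ) < 4/(r₁-1) := by positivity
        linarith
      calc (1:ℝ)/(1-r) ≤ 4/(r₁-1) + 1/(1-r) := h4
        _ = (4/(r₁-1) + 1/(1-r)) * 1 := by ring
        _ ≤ (4/(r₁-1) + 1/(1-r)) * x := by
          apply mul_le_mul_of_nonneg_left hx1 hCpos.le
    have h5 : (4/(r₁-1) + 1/(1-r)) * x ≤ (4/(r₁-1) + 1/(1-r)) * max (x ^ θ) x :=
      mul_le_mul_of_nonneg_left (le_max_right _ _) hCpos.le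
    linarith
  -- case 0 < x < 1
  · set L : ℝ := logb 2 x⁻¹ / (1-b) with hL_def
    have hlogb0 : 0 ≤ logb 2 x⁻¹ :=
      logb_nonneg h2 (one_le_inv_iff₀.2 ⟨hxpos, hx1.le⟩)
    have hL0 : 0 ≤ L := div_nonneg hlogb0 (by linarith)
    set N : ℕ := ⌈L⌉₊ with hN_def
    have hNgeL : L ≤ (N:ℝ) := Nat.le_ceil L
    have hNle : (N:ℝ) ≤ L + 1 := (Nat.ceil_lt_add_one hL0).le
    have hkey : ∀ c : ℝ, (2:ℝ) ^ (logb 2 x⁻¹ * c) = x ^ (-c) := by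
      intro c
      rw [rpow_mul (by norm_num), rpow_logb two_pos (by norm_num) (by positivity),
        inv_rpow hx, ← rpow_neg hx]
    have hxθ : x * (2:ℝ) ^ ((1-a)*L) = x ^ θ := by
      have e1 : (1-a)*L = logb 2 x⁻¹ * ((1-a)/(1-b)) := by
        rw [hL_def]; field_simp
      rw [e1, hkey]
      rw [show x * x ^ (-((1-a)/(1-b))) = x ^ (1 + -((1-a)/(1-b))) by
        rw [rpow_add hxpos, rpow_one]]
      congr 1
      rw [hθ_def]
      field_simp
      ring
    have hxθ2 : (2:ℝ) ^ ((b-a)*L) = x ^ θ := by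
      have e1 : (b-a)*L = logb 2 x⁻¹ * ((b-a)/(1-b)) := by
        rw [hL_def]; field_simp
      rw [e1, hkey]
      congr 1
      rw [hθ_def]
      field_simp
      ring
    -- finite part
    have hfin : (∑ i ∈ Finset.range N, f i) ≤ 4/(r₁-1) * x ^ θ := by
      have h1 : (∑ i ∈ Finset.range N, f i) ≤ ∑ i ∈ Finset.range N, x * r₁ ^ (i+1) :=
        Finset.sum_le_sum fun i _ => hfB i
      have h2' : (∑ i ∈ Finset.range N, x * r₁ ^ (i+1)) = x * r₁ * ((r₁^N - 1)/(r₁ - 1)) := by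
        rw [← geom_sum_eq hr₁1.ne' N, Finset.mul_sum]
        apply Finset.sum_congr rfl
        intro i _
        ring
      have h3 : x * r₁ * ((r₁^N - 1)/(r₁ - 1)) ≤ x * r₁^(N+1) / (r₁ - 1) := by
        have key : x * r₁ * (r₁ ^ N - 1) ≤ x * r₁ ^ (N+1) := by
          rw [pow_succ]
          nlinarith [mul_nonneg hx (by linarith : (0:ℝ) ≤ r₁)]
        calc x * r₁ * ((r₁^N - 1)/(r₁ - 1)) = (x * r₁ * (r₁^N - 1))/(r₁-1) := by ring
          _ ≤ x * r₁^(N+1) / (r₁ - 1) := by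
              exact (div_le_div_iff_of_pos_right hr₁pos).2 key
      have h4 : r₁^(N+1) ≤ 4 * (2:ℝ)^((1-a)*L) := by
        rw [hrpow (1-a) (N+1)]
        push_cast
        have e1 : (1-a) * ((N:ℝ)+1) ≤ (1-a)*(L+2) := by nlinarith
        calc (2:ℝ) ^ ((1-a) * ((N:ℝ)+1)) ≤ (2:ℝ) ^ ((1-a)*(L+2)) :=
              rpow_le_rpow_of_exponent_le (by norm_num) (by push_cast; linarith)
          _ = (2:ℝ)^((1-a)*2) * (2:ℝ)^((1-a)*L) := by
              rw [← rpow_add two_pos]; ring_nf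
          _ ≤ 4 * (2:ℝ)^((1-a)*L) := by
              apply mul_le_mul_of_nonneg_right _ (rpow_pos_of_pos two_pos _).le
              calc (2:ℝ)^((1-a)*2) ≤ (2:ℝ)^(2:ℝ) :=
                    rpow_le_rpow_of_exponent_le (by norm_num) (by nlinarith)
                _ = 4 := by
                    rw [show (2:ℝ) = ((2:ℕ):ℝ) by norm_num, rpow_natCast]
                    norm_num
      have h5 : x * r₁^(N+1) / (r₁ - 1) ≤ 4/(r₁-1) * x ^ θ := by
        rw [div_le_iff₀ (by linarith), ← hxθ]
        have : x * r₁^(N+1) ≤ x * (4 * (2:ℝ)^((1-a)*L)) :=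
          mul_le_mul_of_nonneg_left h4 hx
        calc x * r₁^(N+1) ≤ x * (4 * (2:ℝ)^((1-a)*L)) := this
          _ = 4/(r₁-1) * (x * (2:ℝ)^((1-a)*L)) * (r₁ - 1) := by
              field_simp
      linarith
    -- tail part
    have htail2 : (∑' n : ℕ, f (n + N)) ≤ 1/(1-r) * x ^ θ := by
      have h1 := htail N
      have h2' : r ^ (N+1) ≤ x ^ θ := by
        rw [hrpow (b-a) (N+1), ← hxθ2]
        apply rpow_le_rpow_of_exponent_le one_le_two
        push_cast
        nlinarith [hNgeL]
      calc (∑' n : ℕ, f (n + N)) ≤ r ^ (N+1) * (1-r)⁻¹ := h1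
        _ ≤ x ^ θ * (1-r)⁻¹ := by
            apply mul_le_mul_of_nonneg_right h2' (by positivity)
        _ = 1/(1-r) * x ^ θ := by ring
    have hsplit := hsum.sum_add_tsum_nat_add N
    have hfinal : (∑' n : ℕ, f n) ≤ (4/(r₁-1) + 1/(1-r)) * x ^ θ := by
      rw [← hsplit]
      linarith
    calc (∑' n : ℕ, f n) ≤ (4/(r₁-1) + 1/(1-r)) * x ^ θ := hfinal
      _ ≤ (4/(r₁-1) + 1/(1-r)) * max (x ^ θ) x :=
          mul_le_mul_of_nonneg_left (le_max_left _ _) hCpos.le
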